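/- Let b_Dir : ℝ → ℝ be the indicator function of the irrationals. For every x ∈ ℝ and every ε > 0, the set of continuous functions X : [0,ε] → ℝ satisfying X(t) = x + ∫₀ᵗ b_Dir(X(s)) ds for all t ∈ [0,ε] is infinite. (Solutions are obtained by following X(t) = x + t and branching to a constant at any time t₀ ∈ [0,ε) with x + t₀ ∈ ℚ.) -/

import Mathlib

open MeasureTheory intervalIntegral

/-- The Dirichlet function: indicator of the irrationals. -/
noncomputable def bDir : ℝ → ℝ := Set.indicator {x : ℝ | Irrational x} 1

lemma bDir_irr {y : ℝ} (h : Irrational y) : bDir y = 1 := Set.indicator_of_mem h 1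

lemma bDir_rat {y : ℝ} (h : ¬ Irrational y) : bDir y = 0 := Set.indicator_of_notMem h 1

lemma ae_irr (x : ℝ) : ∀ᵐ s : ℝ, Irrational (x + s) := by
  have hc : {s : ℝ | ¬ Irrational (x + s)}.Countable := by
    have hsub : {s : ℝ | ¬ Irrational (x + s)} ⊆ (fun q : ℚ => (q : ℝ) - x) '' Set.univ := by
      intro s hs
      simp only [Set.mem_setOf_eq, Irrational, not_not, Set.mem_range] at hs
      obtain ⟨q, hq⟩ := hs
      exact ⟨q, Set.mem_univ q, by simp only []; linarith⟩
    exact (Set.countable_univ.image _).mono hsub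
  have h0 : volume {s : ℝ | ¬ Irrational (x + s)} = 0 := hc.measure_zero _
  filter_upwards [MeasureTheory.measure_eq_zero_iff_ae_notMem.mp h0] with s hs
  simpa using hs

lemma key_int {x t₀ : ℝ} (ht₀ : 0 ≤ t₀) (hr : ¬ Irrational (x + t₀)) {t : ℝ} (ht : 0 ≤ t) :
    ∫ s in (0:ℝ)..t, bDir (x + min s t₀) = min t t₀ := by
  have hae : ∀ᵐ s : ℝ, bDir (x + min s t₀) = Set.indicator {s : ℝ | s ≤ t₀} (fun _ => (1:ℝ)) s := by
    filter_upwards [ae_irr x] with s hs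
    rcases le_or_gt s t₀ with h | h
    · rw [min_eq_left h, bDir_irr hs]; simp [Set.indicator_apply, h]
    · rw [min_eq_right h.le, bDir_rat hr]; simp [Set.indicator_apply, h.not_ge]
  rw [intervalIntegral.integral_congr_ae (by filter_upwards [hae] with s hs _ using hs)]
  rcases le_or_gt t t₀ with h | h
  · rw [min_eq_left h]
    rw [intervalIntegral.integral_congr (g := fun _ => (1:ℝ))
      (fun s hs => ?_)]
    · simp
    · rw [Set.uIcc_of_le ht] at hs
      simp [Set.indicator_apply, hs.2.trans h]
  · rw [min_eq_right h.le]
    rw [intervalIntegral.integral_indicator (f := fun _ => (1:ℝ)) ⟨ht₀, h.le⟩]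
    simp

theorem stmt2 (x ε : ℝ) (hε : 0 < ε) :
    {f : Set.Icc (0:ℝ) ε → ℝ | ∃ X : ℝ → ℝ,
      ContinuousOn X (Set.Icc (0:ℝ) ε) ∧
      (∀ t ∈ Set.Icc (0:ℝ) ε, X t = x + ∫ s in (0:ℝ)..t, bDir (X s)) ∧
      f = (Set.Icc (0:ℝ) ε).restrict X}.Infinite := by
  obtain ⟨q₁, hq1, hq1'⟩ := exists_rat_btwn (show x < x + ε/2 by linarith)
  obtain ⟨q₂, hq2, hq2'⟩ := exists_rat_btwn (show (q₁:ℝ) < x + ε by linarith)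
  set S : Set ℝ := (fun q : ℚ => (q : ℝ) - x) '' (Set.Ioo q₁ q₂)
  have hS : S.Infinite := by
    refine Set.Infinite.image ?_ (Set.Ioo_infinite (by exact_mod_cast hq2))
    intro a _ b _ hab
    simp only [] at hab
    exact_mod_cast (by linarith : (a:ℝ) = b)
  apply Set.infinite_of_injOn_mapsTo (f := fun t₀ => (Set.Icc (0:ℝ) ε).restrict (fun t => x + min t t₀)) _ _ hS
  · -- InjOn
    intro a ha b hb hab
    obtain ⟨qa, hqa, rfl⟩ := ha
    obtain ⟨qb, hqb, rfl⟩ := hb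
    have haε : (qa:ℝ) - x ≤ ε := by
      nlinarith [(show (qa:ℝ) < q₂ by exact_mod_cast hqa.2), hq2']
    have hbε : (qb:ℝ) - x ≤ ε := by
      nlinarith [(show (qb:ℝ) < q₂ by exact_mod_cast hqb.2), hq2']
    have := congrFun hab ⟨ε, by constructor <;> linarith⟩
    simp only [Set.restrict_apply] at this
    change x + min ε ((qa:ℝ) - x) = x + min ε ((qb:ℝ) - x) at this
    rw [min_eq_right haε, min_eq_right hbε] at this
    show (qa:ℝ) - x = (qb:ℝ) - x
    linarith
  · -- MapsTo
    intro t₀ ht₀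
    obtain ⟨q, hq, rfl⟩ := ht₀
    have hq1r : (q₁:ℝ) < q := by exact_mod_cast hq.1
    have hq2r : (q:ℝ) < q₂ := by exact_mod_cast hq.2
    have ht₀pos : 0 < (q:ℝ) - x := by linarith
    have hrat : ¬ Irrational (x + ((q:ℝ) - x)) := by
      rw [show x + ((q:ℝ) - x) = (q:ℝ) by ring]
      exact Rat.not_irrational q
    refine ⟨fun t => x + min t ((q:ℝ) - x), ?_, ?_, rfl⟩
    · exact (continuous_const.add (continuous_id.min continuous_const)).continuousOn
    · intro t ht
      rw [key_int ht₀pos.le hrat ht.1]
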